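/- Let V be a finite vertex set and G=(V,A) a digraph, and suppose a ∈ [0,1) satisfies a < 1/(Id(u)+1) for every u ∈ V. Then for every sign vector σ ∈ {−1,1}^A, the set O_{G,σ,a} := {(T,x) ∈ [0,1]^A × [0,1]^V : inf_{t≥0} d_max(F_{G,σ,T,a}^t(x), Δ_T) > 0} is open and dense in [0,1]^A × [0,1]^V, and its complement has Lebesgue measure zero. -/

import Mathlib

open MeasureTheory Filter Topology
open scoped ENNReal

/-- The Heaviside function: `H(s) = 1` if `s ≥ 0`, and `0` otherwise. -/
noncomputable def heaviside (s : ℝ) : ℝ := if 0 ≤ s then 1 else 0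

/-- Signs `{-1,1}` encoded by booleans: `true ↦ +1`, `false ↦ -1`. -/
def signVal (b : Bool) : ℝ := if b then 1 else -1

variable {V : Type*} [Fintype V] [DecidableEq V]

/-- In-degree of a vertex `v` in the arrow set `A`: `Id(v) = #{u : (u,v) ∈ A}`. -/
def inDeg {V : Type*} [DecidableEq V] (A : Finset (V × V)) (v : V) : ℕ :=
  (A.filter fun e => e.2 = v).card

/-- The regulatory map `F_{G,σ,T,a}(x)_v = a x_v + (1-a) (1/Id(v)) Σ_{(u,v)∈A} H(σ_{(u,v)}(x_u - T_{(u,v)}))`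
(the interaction term being `0` when `Id(v) = 0`, by the convention `(0 : ℝ)⁻¹ = 0`). -/
noncomputable def regMap {V : Type*} [Fintype V] [DecidableEq V] (A : Finset (V × V))
    (σ : {e // e ∈ A} → Bool) (T : {e // e ∈ A} → ℝ) (a : ℝ) (x : V → ℝ) : V → ℝ := fun v =>
  a * x v + (1 - a) * ((inDeg A v : ℝ)⁻¹ *
    ∑ e ∈ A.attach.filter (fun e => e.val.2 = v),
      heaviside (signVal (σ e) * (x e.val.1 - T e)))

/-- The cube `[0,1]^V`. -/
def cubeV (V : Type*) [Fintype V] : Set (V → ℝ) := Set.pi Set.univ fun _ => Set.Icc (0:ℝ) 1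

/-- The cube `[0,1]^A`. -/
def cubeA {V : Type*} [Fintype V] [DecidableEq V] (A : Finset (V × V)) :
    Set ({e // e ∈ A} → ℝ) := Set.pi Set.univ fun _ => Set.Icc (0:ℝ) 1

/-- The discontinuity set `Δ_T = {x ∈ [0,1]^V : x_u = T_{(u,v)} for some (u,v) ∈ A}`. -/
def discSet {V : Type*} [Fintype V] [DecidableEq V] (A : Finset (V × V))
    (T : {e // e ∈ A} → ℝ) : Set (V → ℝ) :=
  {x | x ∈ cubeV V ∧ ∃ e : {e // e ∈ A}, x e.val.1 = T e}

/-- `inf_{t ≥ 0} d_max(F^t(x), Δ_T)` as an extended nonnegative real (the metric on `V → ℝ`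
is the sup metric `d_max`, and the distance to the empty set is `∞`). -/
noncomputable def orbitGap {V : Type*} [Fintype V] [DecidableEq V] (A : Finset (V × V))
    (σ : {e // e ∈ A} → Bool) (T : {e // e ∈ A} → ℝ) (a : ℝ) (x : V → ℝ) : ℝ≥0∞ :=
  ⨅ t : ℕ, EMetric.infEdist ((regMap A σ T a)^[t] x) (discSet A T)

/-- `asympPeriod A σ T a x τ` says that the asymptotic period `P(F_{G,σ,T,a}, x)` equals `τ`:
there is a periodic point `y ∈ [0,1]^V` of minimal period `τ ≥ 1` whose orbit attracts that
of `x` (distances are the sup metric `d_max`). -/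
def asympPeriod {V : Type*} [Fintype V] [DecidableEq V] (A : Finset (V × V))
    (σ : {e // e ∈ A} → Bool) (T : {e // e ∈ A} → ℝ) (a : ℝ) (x : V → ℝ) (τ : ℕ) : Prop :=
  1 ≤ τ ∧ ∃ y ∈ cubeV V, (regMap A σ T a)^[τ] y = y ∧
    (∀ t, 0 < t → t < τ → (regMap A σ T a)^[t] y ≠ y) ∧
    Filter.Tendsto (fun t => dist ((regMap A σ T a)^[t] x) ((regMap A σ T a)^[t] y))
      Filter.atTop (nhds 0)


set_option linter.unusedSectionVars false

section Aux

/-- possible values of the interaction term -/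
noncomputable def SvF {V : Type*} [DecidableEq V] (A : Finset (V × V)) (v : V) : Finset ℝ :=
  (Finset.range (inDeg A v + 1)).image fun k : ℕ => (inDeg A v : ℝ)⁻¹ * (k : ℝ)

/-- possible values of the "forced part" of the orbit at time t -/
noncomputable def Rsets {V : Type*} [DecidableEq V] (A : Finset (V × V)) (v : V) (a : ℝ) :
    ℕ → Finset ℝ
  | 0 => {0}
  | t+1 => ((Rsets A v a t) ×ˢ SvF A v).image fun p => a * p.1 + (1 - a) * p.2

variable {V : Type*} [Fintype V] [DecidableEq V] (A : Finset (V × V))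

lemma gval_mem (σ : {e // e ∈ A} → Bool) (T : {e // e ∈ A} → ℝ) (x : V → ℝ) (v : V) :
    (inDeg A v : ℝ)⁻¹ * ∑ e ∈ A.attach.filter (fun e => e.val.2 = v),
      heaviside (signVal (σ e) * (x e.val.1 - T e)) ∈ SvF A v := by
  classical
  set s := A.attach.filter (fun e => e.val.2 = v) with hs
  have hsum : ∑ e ∈ s, heaviside (signVal (σ e) * (x e.val.1 - T e))
      = ((s.filter (fun e => 0 ≤ signVal (σ e) * (x e.val.1 - T e))).card : ℝ) := by
    simp only [heaviside]
    rw [Finset.sum_boole]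
  have hcards : s.card = inDeg A v := by
    rw [hs, inDeg]
    apply Finset.card_bij (fun e _ => e.val)
    · intro e he
      simp only [Finset.mem_filter] at he ⊢
      exact ⟨e.prop, he.2⟩
    · intro e he e' he' h
      exact Subtype.ext h
    · intro e he
      simp only [Finset.mem_filter] at he
      exact ⟨⟨e, he.1⟩, Finset.mem_filter.2 ⟨Finset.mem_attach _ _, he.2⟩, rfl⟩
  have hk : (s.filter (fun e => 0 ≤ signVal (σ e) * (x e.val.1 - T e))).card ≤ inDeg A v := by
    rw [← hcards]; exact Finset.card_filter_le _ _
  rw [hsum, SvF]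
  exact Finset.mem_image.2 ⟨_, Finset.mem_range.2 (Nat.lt_succ_of_le hk), rfl⟩

lemma SvF_bounds {v : V} {c : ℝ} (hc : c ∈ SvF A v) : 0 ≤ c ∧ c ≤ 1 := by
  rw [SvF, Finset.mem_image] at hc
  obtain ⟨k, hk, rfl⟩ := hc
  have hk' : k ≤ inDeg A v := Nat.lt_succ_iff.1 (Finset.mem_range.1 hk)
  rcases Nat.eq_zero_or_pos (inDeg A v) with h0 | hpos
  · have : k = 0 := by omega
    simp [this, h0]
  · have hd : (0:ℝ) < inDeg A v := by exact_mod_cast hpos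
    constructor
    · positivity
    · rw [inv_mul_le_iff₀ hd, mul_one]
      exact_mod_cast hk'

lemma Rsets_bounds {v : V} {a : ℝ} (ha0 : 0 ≤ a) (ha1 : a ≤ 1) :
    ∀ t, ∀ r ∈ Rsets A v a t, 0 ≤ r ∧ r ≤ 1 := by
  intro t
  induction t with
  | zero => intro r hr; simp [Rsets] at hr; simp [hr]
  | succ t ih =>
    intro r hr
    simp only [Rsets, Finset.mem_image, Finset.mem_product] at hr
    obtain ⟨⟨p, c⟩, ⟨hp, hc⟩, rfl⟩ := hr
    obtain ⟨hp0, hp1⟩ := ih p hp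
    obtain ⟨hc0, hc1⟩ := SvF_bounds A hc
    constructor
    · have : 0 ≤ 1 - a := by linarith
      positivity
    · nlinarith

lemma Rsets_card {v : V} {a : ℝ} : ∀ t, (Rsets A v a t).card ≤ (inDeg A v + 1) ^ t := by
  intro t
  induction t with
  | zero => simp [Rsets]
  | succ t ih =>
    calc (Rsets A v a (t+1)).card ≤ ((Rsets A v a t) ×ˢ SvF A v).card :=
          Finset.card_image_le
      _ = (Rsets A v a t).card * (SvF A v).card := Finset.card_product _ _
      _ ≤ (inDeg A v + 1) ^ t * (inDeg A v + 1) := by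
          apply Nat.mul_le_mul ih
          calc (SvF A v).card ≤ (Finset.range (inDeg A v + 1)).card := Finset.card_image_le
            _ = inDeg A v + 1 := Finset.card_range _
      _ = (inDeg A v + 1) ^ (t+1) := by ring

lemma Rsets_decomp {v : V} {a : ℝ} (ha0 : 0 ≤ a) (ha1 : a ≤ 1) :
    ∀ t, ∀ r ∈ Rsets A v a t, ∀ n ≤ t, ∃ r' ∈ Rsets A v a n, |r - r'| ≤ a ^ n := by
  intro t
  induction t with
  | zero =>
    intro r hr n hn
    interval_cases n
    exact ⟨r, hr, by simp⟩
  | succ t ih =>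
    intro r hr n hn
    simp only [Rsets, Finset.mem_image, Finset.mem_product] at hr
    obtain ⟨⟨p, c⟩, ⟨hp, hc⟩, rfl⟩ := hr
    match n with
    | 0 =>
      refine ⟨0, by simp [Rsets], ?_⟩
      have h1 := Rsets_bounds A ha0 ha1 t p hp
      have h2 := SvF_bounds A hc
      rw [pow_zero, sub_zero, abs_le]
      constructor <;> nlinarith [h1.1, h1.2, h2.1, h2.2]
    | n'+1 =>
      obtain ⟨r'', hr'', hd⟩ := ih p hp n' (by omega)
      refine ⟨a * r'' + (1 - a) * c, ?_, ?_⟩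
      · simp only [Rsets, Finset.mem_image, Finset.mem_product]
        exact ⟨(r'', c), ⟨hr'', hc⟩, rfl⟩
      · have : a * p + (1 - a) * c - (a * r'' + (1 - a) * c) = a * (p - r'') := by ring
        rw [this, abs_mul, abs_of_nonneg ha0, pow_succ, mul_comm (a ^ n') a]
        exact mul_le_mul_of_nonneg_left hd ha0

lemma orbit_form (σ : {e // e ∈ A} → Bool) (T : {e // e ∈ A} → ℝ) (a : ℝ) (x : V → ℝ) (v : V) :
    ∀ t : ℕ, ∃ r ∈ Rsets A v a t, (regMap A σ T a)^[t] x v = a ^ t * x v + r := by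
  intro t
  induction t with
  | zero => exact ⟨0, by simp [Rsets], by simp⟩
  | succ t ih =>
    obtain ⟨r, hr, hx⟩ := ih
    rw [Function.iterate_succ_apply']
    set g := (inDeg A v : ℝ)⁻¹ * ∑ e ∈ A.attach.filter (fun e => e.val.2 = v),
      heaviside (signVal (σ e) * (((regMap A σ T a)^[t] x) e.val.1 - T e)) with hg
    refine ⟨a * r + (1 - a) * g, ?_, ?_⟩
    · simp only [Rsets, Finset.mem_image, Finset.mem_product]
      exact ⟨(r, g), ⟨hr, gval_mem A σ T _ v⟩, rfl⟩
    · show a * ((regMap A σ T a)^[t] x v) + (1 - a) * g = _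
      rw [hx]; ring
/-- the attracting Cantor set (thickened at scale `b^m`) for coordinate `v` -/
noncomputable def DSet {V : Type*} [DecidableEq V] (A : Finset (V × V)) (v : V) (a b : ℝ) :
    Set ℝ :=
  ⋂ m : ℕ, ⋃ r ∈ Rsets A v a m, Metric.closedBall r (3 * b ^ m)

lemma DSet_closed (v : V) (a b : ℝ) : IsClosed (DSet A v a b) := by
  apply isClosed_iInter
  intro m
  apply Set.Finite.isClosed_biUnion (Finset.finite_toSet _)
  intro r _
  exact Metric.isClosed_closedBall

lemma DSet_null (v : V) {a b : ℝ} (hb0 : 0 ≤ b) (hb1 : (inDeg A v + 1 : ℝ) * b < 1) :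
    volume (DSet A v a b) = 0 := by
  have hq0 : (0:ℝ) ≤ (inDeg A v + 1 : ℝ) * b := by positivity
  have hlayer : ∀ m : ℕ, volume (DSet A v a b) ≤
      ENNReal.ofReal (6 * ((inDeg A v + 1 : ℝ) * b) ^ m) := by
    intro m
    have h1 : volume (DSet A v a b) ≤ volume (⋃ r ∈ Rsets A v a m,
        Metric.closedBall r (3 * b ^ m)) :=
      measure_mono (Set.iInter_subset _ m)
    refine h1.trans ?_
    calc volume (⋃ r ∈ Rsets A v a m, Metric.closedBall r (3 * b ^ m))
        ≤ ∑ r ∈ Rsets A v a m, volume (Metric.closedBall r (3 * b ^ m)) :=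
          measure_biUnion_finset_le _ _
      _ = ∑ _r ∈ Rsets A v a m, ENNReal.ofReal (2 * (3 * b ^ m)) := by
          simp [Real.volume_closedBall]
      _ = (Rsets A v a m).card * ENNReal.ofReal (2 * (3 * b ^ m)) := by
          rw [Finset.sum_const, nsmul_eq_mul]
      _ ≤ ((inDeg A v + 1) ^ m : ℕ) * ENNReal.ofReal (2 * (3 * b ^ m)) := by
          gcongr
          exact_mod_cast Rsets_card A m
      _ = ENNReal.ofReal (((inDeg A v + 1 : ℝ)) ^ m * (2 * (3 * b ^ m))) := by
          rw [← ENNReal.ofReal_natCast, ← ENNReal.ofReal_mul (by positivity)]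
          congr 1
          push_cast
          ring
      _ = ENNReal.ofReal (6 * ((inDeg A v + 1 : ℝ) * b) ^ m) := by
          congr 1
          rw [mul_pow]
          ring
  have htend : Tendsto (fun m : ℕ => ENNReal.ofReal (6 * ((inDeg A v + 1 : ℝ) * b) ^ m))
      atTop (nhds 0) := by
    have : Tendsto (fun m : ℕ => 6 * ((inDeg A v + 1 : ℝ) * b) ^ m) atTop (nhds 0) := by
      have := tendsto_pow_atTop_nhds_zero_of_lt_one hq0 hb1
      simpa using this.const_mul (6:ℝ)
    simpa using ENNReal.tendsto_ofReal this
  have := ge_of_tendsto' htend hlayer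
  simpa using this

lemma exists_beta (y : ℕ → ℝ) (c : ℝ) (hy : ∀ s, y s ≠ c) {b : ℝ} (hb : 0 < b) :
    ∀ m : ℕ, ∃ β : ℝ, 0 < β ∧ β ≤ b ^ m ∧ ∀ s < m, β ≤ |y s - c| := by
  intro m
  induction m with
  | zero => exact ⟨1, by norm_num, by simp, by omega⟩
  | succ m ih =>
    obtain ⟨β, hβ0, hβb, hβs⟩ := ih
    refine ⟨min (min β (b ^ (m+1))) |y m - c|, ?_, ?_, ?_⟩
    · have : 0 < |y m - c| := abs_pos.2 (sub_ne_zero.2 (hy m))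
      positivity
    · exact le_trans (min_le_left _ _) (min_le_right _ _)
    · intro s hs
      rcases Nat.lt_succ_iff_lt_or_eq.1 hs with h | rfl
      · exact le_trans (le_trans (min_le_left _ _) (min_le_left _ _)) (hβs s h)
      · exact min_le_right _ _

/-- Key extraction: if the inf of coordinate distances to `c` along the orbit is `0`, then
either `c` is an exact orbit value, or `c` lies in the Cantor set `DSet`. -/
lemma key_extraction (σ : {e // e ∈ A} → Bool) (T : {e // e ∈ A} → ℝ) {a : ℝ}
    (ha0 : 0 ≤ a) (ha1 : a ≤ 1) (x : V → ℝ) (hx : x ∈ cubeV V) (u : V) (c : ℝ) {b : ℝ}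
    (hab : a ≤ b) (hb0 : 0 < b) (hb1 : b ≤ 1)
    (h0 : ⨅ t : ℕ, edist ((regMap A σ T a)^[t] x u) c = 0) :
    (∃ t : ℕ, ∃ r ∈ Rsets A u a t, c = a ^ t * x u + r) ∨ c ∈ DSet A u a b := by
  set y : ℕ → ℝ := fun t => (regMap A σ T a)^[t] x u with hy
  by_cases hc : ∃ t, y t = c
  · left
    obtain ⟨t, ht⟩ := hc
    obtain ⟨r, hr, hform⟩ := orbit_form A σ T a x u t
    exact ⟨t, r, hr, by rw [← ht, hy]; simpa using hform⟩
  · right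
    push_neg at hc
    rw [DSet, Set.mem_iInter]
    intro m
    obtain ⟨β, hβ0, hβb, hβs⟩ := exists_beta y c hc hb0 m
    -- find t with |y t - c| < β
    have hlt : ∃ t, edist (y t) c < ENNReal.ofReal β := by
      rw [← iInf_lt_iff, h0]
      exact ENNReal.ofReal_pos.2 hβ0
    obtain ⟨t, ht⟩ := hlt
    rw [edist_dist, ENNReal.ofReal_lt_ofReal_iff hβ0, Real.dist_eq] at ht
    have htm : m ≤ t := by
      by_contra hmt
      exact absurd ht (not_lt.2 (hβs t (by omega)))
    obtain ⟨r, hr, hform⟩ := orbit_form A σ T a x u t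
    obtain ⟨r', hr', hdr⟩ := Rsets_decomp A ha0 ha1 t r hr m htm
    rw [Set.mem_iUnion₂]
    refine ⟨r', hr', ?_⟩
    rw [Metric.mem_closedBall, Real.dist_eq]
    have hxu : 0 ≤ x u ∧ x u ≤ 1 := hx u (Set.mem_univ u)
    have hytr : |y t - r| ≤ b ^ m := by
      rw [hy]
      simp only
      rw [hform, add_sub_cancel_right, abs_mul, abs_of_nonneg (pow_nonneg ha0 t)]
      calc a ^ t * |x u| ≤ a ^ t * 1 := by
            apply mul_le_mul_of_nonneg_left _ (pow_nonneg ha0 t)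
            rw [abs_of_nonneg hxu.1]; exact hxu.2
        _ = a ^ t := mul_one _
        _ ≤ b ^ t := pow_le_pow_left₀ ha0 hab t
        _ ≤ b ^ m := pow_le_pow_of_le_one hb0.le hb1 htm
    have ham : a ^ m ≤ b ^ m := pow_le_pow_left₀ ha0 hab m
    calc |c - r'| ≤ |c - y t| + |y t - r'| := abs_sub_le _ _ _
      _ ≤ |c - y t| + (|y t - r| + |r - r'|) := by
          gcongr
          exact abs_sub_le _ _ _
      _ ≤ β + (b ^ m + a ^ m) := by
          gcongr
          rw [abs_sub_comm]; exact ht.le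
      _ ≤ b ^ m + (b ^ m + b ^ m) := by gcongr
      _ = 3 * b ^ m := by ring

lemma coord_le_infEdist (T : {e // e ∈ A} → ℝ) (y : V → ℝ) :
    (⨅ e : {e // e ∈ A}, edist (y e.val.1) (T e)) ≤ EMetric.infEdist y (discSet A T) := by
  rw [EMetric.infEdist, EMetric.le_infEdist]
  rintro z ⟨hzc, e, hze⟩
  calc (⨅ e' : {e // e ∈ A}, edist (y e'.val.1) (T e')) ≤ edist (y e.val.1) (T e) := iInf_le _ e
    _ = edist (y e.val.1) (z e.val.1) := by rw [hze]
    _ ≤ edist y z := edist_le_pi_edist y z _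

lemma infEdist_le_coord {T : {e // e ∈ A} → ℝ} (hT : T ∈ cubeA A) {y : V → ℝ}
    (hy : y ∈ cubeV V) (e : {e // e ∈ A}) :
    EMetric.infEdist y (discSet A T) ≤ edist (y e.val.1) (T e) := by
  have hz : Function.update y e.val.1 (T e) ∈ discSet A T := by
    refine ⟨?_, e, Function.update_self _ _ _⟩
    intro v _
    by_cases hv : v = e.val.1
    · subst hv
      rw [Function.update_self]
      exact hT e (Set.mem_univ e)
    · rw [Function.update_of_ne hv]
      exact hy v (Set.mem_univ v)
  refine le_trans (EMetric.infEdist_le_edist_of_mem hz) ?_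
  rw [edist_pi_def]
  apply Finset.sup_le
  intro v _
  by_cases hv : v = e.val.1
  · subst hv; rw [Function.update_self]
  · rw [Function.update_of_ne hv]
    simp

lemma regMap_mem_cube (σ : {e // e ∈ A} → Bool) (T : {e // e ∈ A} → ℝ) {a : ℝ}
    (ha0 : 0 ≤ a) (ha1 : a ≤ 1) {x : V → ℝ} (hx : x ∈ cubeV V) :
    regMap A σ T a x ∈ cubeV V := by
  intro v _
  have hg := SvF_bounds A (gval_mem A σ T x v)
  have hxv := hx v (Set.mem_univ v)
  obtain ⟨hx0, hx1⟩ := hxv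
  constructor
  · have h1 : 0 ≤ 1 - a := by linarith
    exact add_nonneg (mul_nonneg ha0 hx0) (mul_nonneg h1 hg.1)
  · show a * x v + (1 - a) * _ ≤ 1
    nlinarith [hg.1, hg.2]

lemma iterate_mem_cube (σ : {e // e ∈ A} → Bool) (T : {e // e ∈ A} → ℝ) {a : ℝ}
    (ha0 : 0 ≤ a) (ha1 : a ≤ 1) {x : V → ℝ} (hx : x ∈ cubeV V) (t : ℕ) :
    (regMap A σ T a)^[t] x ∈ cubeV V := by
  induction t with
  | zero => exact hx
  | succ t ih => rw [Function.iterate_succ_apply']; exact regMap_mem_cube A σ T ha0 ha1 ih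

lemma slab_null (e : {e // e ∈ A}) {Z : Set ℝ} (hZm : MeasurableSet Z) (hZ : volume Z = 0) :
    volume {T : {e // e ∈ A} → ℝ | T e ∈ Z} = 0 := by
  have hset : {T : {e // e ∈ A} → ℝ | T e ∈ Z}
      = Set.pi Set.univ (fun i => if i = e then Z else Set.univ) := by
    ext T
    simp only [Set.mem_setOf_eq, Set.mem_pi, Set.mem_univ, true_implies]
    constructor
    · intro h i
      by_cases hi : i = e
      · subst hi; simpa using h
      · simp [hi]
    · intro h; have := h e; simpa using this
  rw [hset, volume_pi, Measure.pi_pi]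
  apply Finset.prod_eq_zero (Finset.mem_univ e)
  simp [hZ]

lemma slab_prod_null (e : {e // e ∈ A}) {Z : Set ℝ} (hZm : MeasurableSet Z)
    (hZ : volume Z = 0) :
    volume {p : ({e // e ∈ A} → ℝ) × (V → ℝ) | p.1 e ∈ Z} = 0 := by
  have hset : {p : ({e // e ∈ A} → ℝ) × (V → ℝ) | p.1 e ∈ Z}
      = {T : {e // e ∈ A} → ℝ | T e ∈ Z} ×ˢ (Set.univ : Set (V → ℝ)) := by
    ext p; simp [Set.mem_prod]
  rw [hset, Measure.volume_eq_prod, Measure.prod_prod, slab_null A e hZm hZ, zero_mul]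

lemma hyper_null (e : {e // e ∈ A}) (t : ℕ) (r : ℝ) (a : ℝ) :
    volume {p : ({e // e ∈ A} → ℝ) × (V → ℝ) | p.1 e = a ^ t * p.2 e.val.1 + r} = 0 := by
  set S : Set ((V → ℝ) × ({e // e ∈ A} → ℝ)) := {q | q.2 e = a ^ t * q.1 e.val.1 + r} with hS
  have hSm : MeasurableSet S := by
    have h1 : Measurable (fun q : (V → ℝ) × ({e // e ∈ A} → ℝ) => q.2 e) :=
      (measurable_pi_apply e).comp measurable_snd
    have h2 : Measurable (fun q : (V → ℝ) × ({e // e ∈ A} → ℝ) => a ^ t * q.1 e.val.1 + r) :=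
      by fun_prop
    exact measurableSet_eq_fun h1 h2
  have hset : {p : ({e // e ∈ A} → ℝ) × (V → ℝ) | p.1 e = a ^ t * p.2 e.val.1 + r}
      = Prod.swap ⁻¹' S := rfl
  rw [hset, Measure.volume_eq_prod,
    (Measure.measurePreserving_swap).measure_preimage hSm.nullMeasurableSet,
    Measure.prod_apply hSm]
  have hsl : ∀ x : V → ℝ, volume (Prod.mk x ⁻¹' S) = 0 := by
    intro x
    have : Prod.mk x ⁻¹' S = {T : {e // e ∈ A} → ℝ | T e ∈ ({a ^ t * x e.val.1 + r} : Set ℝ)} := by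
      ext T; simp [hS]
    rw [this]
    exact slab_null A e (measurableSet_singleton _) Real.volume_singleton
  simp [hsl]

lemma heaviside_eq_of_near {s s' ε : ℝ} (hs : ε ≤ |s|) (h : |s' - s| < ε) (b : Bool) :
    heaviside (signVal b * s') = heaviside (signVal b * s) := by
  have hiff : (0 ≤ signVal b * s') ↔ (0 ≤ signVal b * s) := by
    rw [abs_sub_lt_iff] at h
    cases b <;> rcases le_abs.mp hs with h1 | h1 <;>
      simp only [signVal, Bool.false_eq_true, if_true, if_false, one_mul, neg_one_mul] <;>
      constructor <;> intro h2 <;> nlinarith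
  unfold heaviside
  exact if_congr hiff rfl rfl

end Aux

/-- If `a ∈ [0,1)` satisfies `a < 1/(Id(u)+1)` for every `u ∈ V`, then
for every sign vector `σ`, the set
`O_{G,σ,a} = {(T,x) ∈ [0,1]^A × [0,1]^V : inf_{t≥0} d_max(F_{G,σ,T,a}^t(x), Δ_T) > 0}` is
open and dense in `[0,1]^A × [0,1]^V` (with its subspace topology), and its complement in
`[0,1]^A × [0,1]^V` has Lebesgue measure zero. -/
theorem orbitGap_pos_open_dense_full_measure (V : Type*) [Fintype V] [DecidableEq V]
    (A : Finset (V × V)) (a : ℝ) (ha0 : 0 ≤ a) (ha1 : a < 1)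
    (hsmall : ∀ u : V, a < 1 / (inDeg A u + 1)) (σ : {e // e ∈ A} → Bool) :
    IsOpen {p : ↥(cubeA A ×ˢ cubeV V) | 0 < orbitGap A σ p.val.1 a p.val.2} ∧
    Dense {p : ↥(cubeA A ×ˢ cubeV V) | 0 < orbitGap A σ p.val.1 a p.val.2} ∧
    volume {p : ({e // e ∈ A} → ℝ) × (V → ℝ) |
        p.1 ∈ cubeA A ∧ p.2 ∈ cubeV V ∧ ¬ 0 < orbitGap A σ p.1 a p.2} = 0 := by
  classical
  set b : V → ℝ := fun u => (a + 1 / ((inDeg A u : ℝ) + 1)) / 2 with hbdef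
  have hbfacts : ∀ u : V, a ≤ b u ∧ 0 < b u ∧ b u ≤ 1 ∧ ((inDeg A u : ℝ) + 1) * b u < 1 := by
    intro u
    have hd : (0:ℝ) < (inDeg A u : ℝ) + 1 := by positivity
    have hs : a < 1 / ((inDeg A u : ℝ) + 1) := hsmall u
    have h1 : (0:ℝ) < 1 / ((inDeg A u : ℝ) + 1) := by positivity
    have h2 : (1:ℝ) / ((inDeg A u : ℝ) + 1) ≤ 1 := by
      rw [div_le_one hd]
      have : (0:ℝ) ≤ (inDeg A u : ℝ) := Nat.cast_nonneg _
      linarith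
    have hmul : a * ((inDeg A u : ℝ) + 1) < 1 := (lt_div_iff₀ hd).mp hs
    have hcancel : ((inDeg A u : ℝ) + 1) * (1 / ((inDeg A u : ℝ) + 1)) = 1 :=
      mul_one_div_cancel hd.ne'
    refine ⟨?_, ?_, ?_, ?_⟩
    · simp only [hbdef]; linarith
    · simp only [hbdef]; linarith
    · simp only [hbdef]; linarith
    · simp only [hbdef]; nlinarith
  -- the null superset
  set N : Set (({e // e ∈ A} → ℝ) × (V → ℝ)) :=
    ⋃ e : {e // e ∈ A}, ({p | p.1 e ∈ DSet A e.val.1 a (b e.val.1)} ∪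
      ⋃ t : ℕ, ⋃ r ∈ Rsets A e.val.1 a t, {p | p.1 e = a ^ t * p.2 e.val.1 + r}) with hNdef
  have hNnull : volume N = 0 := by
    apply measure_iUnion_null
    intro e
    apply measure_union_null
    · exact slab_prod_null A e (DSet_closed A _ a _).measurableSet
        (DSet_null A e.val.1 (hbfacts e.val.1).2.1.le (hbfacts e.val.1).2.2.2)
    · apply measure_iUnion_null
      intro t
      refine le_antisymm ?_ zero_le
      refine le_trans (measure_biUnion_finset_le _ _) ?_
      exact le_of_eq (Finset.sum_eq_zero fun r _ => hyper_null A e t r a)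
  have hBadN : {p : ({e // e ∈ A} → ℝ) × (V → ℝ) |
      p.1 ∈ cubeA A ∧ p.2 ∈ cubeV V ∧ ¬ 0 < orbitGap A σ p.1 a p.2} ⊆ N := by
    rintro ⟨T, x⟩ ⟨hT, hx, hgap⟩
    have hgap0 : orbitGap A σ T a x = 0 := le_zero_iff.mp (not_lt.mp hgap)
    have h1 : (⨅ e : {e // e ∈ A}, ⨅ t : ℕ,
        edist (((regMap A σ T a)^[t] x) e.val.1) (T e)) ≤ orbitGap A σ T a x := by
      rw [iInf_comm]
      exact iInf_mono fun t => coord_le_infEdist A T _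
    have hchain : (⨅ e : {e // e ∈ A}, ⨅ t : ℕ,
        edist (((regMap A σ T a)^[t] x) e.val.1) (T e)) = 0 :=
      le_antisymm (hgap0 ▸ h1) zero_le
    have hex : ∃ e : {e // e ∈ A},
        (⨅ t : ℕ, edist (((regMap A σ T a)^[t] x) e.val.1) (T e)) = 0 := by
      by_contra hno
      push_neg at hno
      rcases isEmpty_or_nonempty {e // e ∈ A} with hE | hE
      · rw [iInf_of_empty] at hchain
        simp at hchain
      · have hne : (Finset.univ : Finset {e // e ∈ A}).Nonempty := Finset.univ_nonempty
        set f : {e // e ∈ A} → ℝ≥0∞ := fun e => ⨅ t : ℕ,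
          edist (((regMap A σ T a)^[t] x) e.val.1) (T e) with hf
        have hpos : 0 < Finset.univ.inf' hne f := by
          rw [Finset.lt_inf'_iff]
          intro e _
          exact pos_iff_ne_zero.mpr (hno e)
        have hlt : ∃ e, f e < Finset.univ.inf' hne f := by
          rw [← iInf_lt_iff, hchain]; exact hpos
        obtain ⟨e, he⟩ := hlt
        exact absurd (Finset.inf'_le f (Finset.mem_univ e)) (not_le.mpr he)
    obtain ⟨e, he⟩ := hex
    rcases key_extraction A σ T ha0 ha1.le x hx e.val.1 (T e) (hbfacts e.val.1).1
        (hbfacts e.val.1).2.1 (hbfacts e.val.1).2.2.1 he with ⟨t, r, hr, hc⟩ | hD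
    · exact Set.mem_iUnion.2 ⟨e, Or.inr (Set.mem_iUnion.2 ⟨t, Set.mem_iUnion₂.2 ⟨r, hr, hc⟩⟩)⟩
    · exact Set.mem_iUnion.2 ⟨e, Or.inl hD⟩
  -- openness
  have hopen : IsOpen {p : ↥(cubeA A ×ˢ cubeV V) | 0 < orbitGap A σ p.val.1 a p.val.2} := by
    rw [Metric.isOpen_iff]
    rintro ⟨⟨T, x⟩, hTx⟩ hp
    simp only [Set.mem_setOf_eq] at hp
    rcases isEmpty_or_nonempty {e // e ∈ A} with hE | hE
    · refine ⟨1, one_pos, ?_⟩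
      rintro ⟨⟨T', x'⟩, hq⟩ _
      simp only [Set.mem_setOf_eq]
      have hdisc : discSet A T' = ∅ := by
        ext z; simp [discSet]
      rw [orbitGap, hdisc]
      simp [EMetric.infEdist]
    · obtain ⟨hT, hx⟩ := hTx
      set m := min (orbitGap A σ T a x) 1 with hm
      have hmpos : 0 < m := lt_min hp zero_lt_one
      have hmtop : m ≠ ⊤ := ((min_le_right _ _).trans_lt ENNReal.one_lt_top).ne
      set ε := m.toReal with hεdef
      have hε0 : 0 < ε := ENNReal.toReal_pos hmpos.ne' hmtop
      have hεle : ∀ (t : ℕ) (e : {e // e ∈ A}),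
          ε ≤ |((regMap A σ T a)^[t] x) e.val.1 - T e| := by
        intro t e
        have h1 : m ≤ edist (((regMap A σ T a)^[t] x) e.val.1) (T e) :=
          le_trans (min_le_left _ _) (le_trans (iInf_le _ t)
            (infEdist_le_coord A hT (iterate_mem_cube A σ T ha0 ha1.le hx t) e))
        rw [edist_dist] at h1
        have h2 := ENNReal.toReal_le_of_le_ofReal dist_nonneg h1
        rwa [Real.dist_eq] at h2
      refine ⟨ε / 3, by positivity, ?_⟩
      rintro ⟨⟨T', x'⟩, hq⟩ hball
      simp only [Set.mem_setOf_eq]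
      rw [Metric.mem_ball, Subtype.dist_eq, Prod.dist_eq] at hball
      have hdT : ∀ e : {e // e ∈ A}, |T' e - T e| < ε / 3 := by
        intro e
        calc |T' e - T e| = dist (T' e) (T e) := (Real.dist_eq _ _).symm
          _ ≤ dist T' T := dist_le_pi_dist T' T e
          _ ≤ max (dist T' T) (dist x' x) := le_max_left _ _
          _ < ε / 3 := hball
      have hdx0 : ∀ v, |x' v - x v| < ε / 3 := by
        intro v
        calc |x' v - x v| = dist (x' v) (x v) := (Real.dist_eq _ _).symm
          _ ≤ dist x' x := dist_le_pi_dist x' x v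
          _ ≤ max (dist T' T) (dist x' x) := le_max_right _ _
          _ < ε / 3 := hball
      have hsh : ∀ t : ℕ, ∀ v,
          |((regMap A σ T' a)^[t] x') v - ((regMap A σ T a)^[t] x) v| < ε / 3 := by
        intro t
        induction t with
        | zero => exact hdx0
        | succ t ih =>
          intro v
          rw [Function.iterate_succ_apply', Function.iterate_succ_apply']
          have hsame : ∀ e ∈ A.attach.filter (fun e => e.val.2 = v),
              heaviside (signVal (σ e) * (((regMap A σ T' a)^[t] x') e.val.1 - T' e)) =
              heaviside (signVal (σ e) * (((regMap A σ T a)^[t] x) e.val.1 - T e)) := by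
            intro e _
            apply heaviside_eq_of_near (hεle t e)
            have h2 := ih e.val.1
            have h3 := hdT e
            have heq : (((regMap A σ T' a)^[t] x') e.val.1 - T' e) -
                (((regMap A σ T a)^[t] x) e.val.1 - T e)
                = (((regMap A σ T' a)^[t] x') e.val.1 - ((regMap A σ T a)^[t] x) e.val.1)
                  + -(T' e - T e) := by ring
            calc |(((regMap A σ T' a)^[t] x') e.val.1 - T' e) -
                (((regMap A σ T a)^[t] x) e.val.1 - T e)|
                ≤ |((regMap A σ T' a)^[t] x') e.val.1 - ((regMap A σ T a)^[t] x) e.val.1|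
                  + |-(T' e - T e)| := by rw [heq]; exact abs_add_le _ _
              _ = |((regMap A σ T' a)^[t] x') e.val.1 - ((regMap A σ T a)^[t] x) e.val.1|
                  + |T' e - T e| := by rw [abs_neg]
              _ < ε / 3 + ε / 3 := by exact add_lt_add h2 h3
              _ ≤ ε := by linarith
          have hkey : regMap A σ T' a ((regMap A σ T' a)^[t] x') v -
              regMap A σ T a ((regMap A σ T a)^[t] x) v =
              a * (((regMap A σ T' a)^[t] x') v - ((regMap A σ T a)^[t] x) v) := by
            simp only [regMap]
            rw [Finset.sum_congr rfl hsame]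
            ring
          rw [hkey, abs_mul, abs_of_nonneg ha0]
          calc a * |((regMap A σ T' a)^[t] x') v - ((regMap A σ T a)^[t] x) v|
              ≤ 1 * |((regMap A σ T' a)^[t] x') v - ((regMap A σ T a)^[t] x) v| :=
                mul_le_mul_of_nonneg_right ha1.le (abs_nonneg _)
            _ = |((regMap A σ T' a)^[t] x') v - ((regMap A σ T a)^[t] x) v| := one_mul _
            _ < ε / 3 := ih v
      have hlow : ∀ (t : ℕ) (e : {e // e ∈ A}),
          ENNReal.ofReal (ε / 3) ≤ edist (((regMap A σ T' a)^[t] x') e.val.1) (T' e) := by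
        intro t e
        rw [edist_dist, Real.dist_eq]
        apply ENNReal.ofReal_le_ofReal
        have h1 := hεle t e
        have h2 := hsh t e.val.1
        have h3 := hdT e
        have t1 := abs_sub_le (((regMap A σ T a)^[t] x) e.val.1)
          (((regMap A σ T' a)^[t] x') e.val.1) (T e)
        have t2 := abs_sub_le (((regMap A σ T' a)^[t] x') e.val.1) (T' e) (T e)
        have t3 : |((regMap A σ T a)^[t] x) e.val.1 - ((regMap A σ T' a)^[t] x') e.val.1|
            = |((regMap A σ T' a)^[t] x') e.val.1 - ((regMap A σ T a)^[t] x) e.val.1| :=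
          abs_sub_comm _ _
        linarith
      rw [orbitGap]
      have hfin : ENNReal.ofReal (ε / 3) ≤
          ⨅ t : ℕ, EMetric.infEdist ((regMap A σ T' a)^[t] x') (discSet A T') :=
        le_iInf fun t => le_trans (le_iInf fun e => hlow t e) (coord_le_infEdist A T' _)
      exact lt_of_lt_of_le (ENNReal.ofReal_pos.2 (by positivity)) hfin
  -- density
  have hdense : Dense {p : ↥(cubeA A ×ˢ cubeV V) | 0 < orbitGap A σ p.val.1 a p.val.2} := by
    rw [Metric.dense_iff]
    rintro ⟨⟨T, x⟩, hTx⟩ r hr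
    obtain ⟨hT, hx⟩ := hTx
    set r' := r / 2 with hr'def
    have hr'0 : 0 < r' := by positivity
    have hiv : ∀ c : ℝ, c ∈ Set.Icc (0:ℝ) 1 → max 0 (c - r') < min 1 (c + r') := by
      rintro c ⟨h0, h1⟩
      rw [lt_min_iff]
      constructor <;> rw [max_lt_iff] <;> constructor <;> linarith
    set IT : {e // e ∈ A} → Set ℝ := fun e => Set.Ioo (max 0 (T e - r')) (min 1 (T e + r'))
      with hIT
    set IX : V → Set ℝ := fun v => Set.Ioo (max 0 (x v - r')) (min 1 (x v + r')) with hIX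
    set P := (Set.pi Set.univ IT) ×ˢ (Set.pi Set.univ IX) with hP
    have hPvol : volume P ≠ 0 := by
      have hv1 : volume (Set.pi Set.univ IT) ≠ 0 := by
        rw [volume_pi, Measure.pi_pi, Finset.prod_ne_zero_iff]
        intro e _
        rw [hIT]
        simp only [Real.volume_Ioo]
        exact (ENNReal.ofReal_pos.2 (sub_pos.2 (hiv _ (hT e (Set.mem_univ e))))).ne'
      have hv2 : volume (Set.pi Set.univ IX) ≠ 0 := by
        rw [volume_pi, Measure.pi_pi, Finset.prod_ne_zero_iff]
        intro v _
        rw [hIX]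
        simp only [Real.volume_Ioo]
        exact (ENNReal.ofReal_pos.2 (sub_pos.2 (hiv _ (hx v (Set.mem_univ v))))).ne'
      rw [hP, Measure.volume_eq_prod, Measure.prod_prod]
      exact mul_ne_zero hv1 hv2
    have hnotsub : ¬ P ⊆ N := fun h => hPvol (measure_mono_null h hNnull)
    obtain ⟨q, hqP, hqN⟩ := Set.not_subset.mp hnotsub
    obtain ⟨hq1, hq2⟩ := hqP
    have hqW : q ∈ cubeA A ×ˢ cubeV V := by
      constructor
      · intro e _
        have h := hq1 e (Set.mem_univ e)
        rw [hIT] at h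
        obtain ⟨hl, hu⟩ := h
        exact ⟨((le_max_left 0 _).trans_lt hl).le, (hu.trans_le (min_le_left _ _)).le⟩
      · intro v _
        have h := hq2 v (Set.mem_univ v)
        rw [hIX] at h
        obtain ⟨hl, hu⟩ := h
        exact ⟨((le_max_left 0 _).trans_lt hl).le, (hu.trans_le (min_le_left _ _)).le⟩
    have hgapq : 0 < orbitGap A σ q.1 a q.2 := by
      by_contra h
      exact hqN (hBadN ⟨hqW.1, hqW.2, h⟩)
    refine ⟨⟨q, hqW⟩, ?_, hgapq⟩
    rw [Metric.mem_ball, Subtype.dist_eq]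
    have hd1 : dist q.1 T ≤ r' := by
      rw [dist_pi_le_iff hr'0.le]
      intro e
      have h := hq1 e (Set.mem_univ e)
      rw [hIT] at h
      obtain ⟨hl, hu⟩ := h
      have hl' : T e - r' < q.1 e := (le_max_right 0 _).trans_lt hl
      have hu' : q.1 e < T e + r' := hu.trans_le (min_le_right _ _)
      rw [Real.dist_eq, abs_le]
      constructor <;> linarith
    have hd2 : dist q.2 x ≤ r' := by
      rw [dist_pi_le_iff hr'0.le]
      intro v
      have h := hq2 v (Set.mem_univ v)
      rw [hIX] at h
      obtain ⟨hl, hu⟩ := h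
      have hl' : x v - r' < q.2 v := (le_max_right 0 _).trans_lt hl
      have hu' : q.2 v < x v + r' := hu.trans_le (min_le_right _ _)
      rw [Real.dist_eq, abs_le]
      constructor <;> linarith
    have : dist q (T, x) ≤ r' := by
      rw [Prod.dist_eq]
      exact max_le hd1 hd2
    calc dist q (T, x) ≤ r' := this
      _ < r := by rw [hr'def]; linarith
  exact ⟨hopen, hdense, measure_mono_null hBadN hNnull⟩
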